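/- Let 0 < β ≤ 1 and d ≥ 1. When the clique lossless coupling scheme is used, a set S = {s_1,…,s_p} ⊆ U influences at least a β fraction of users in G^{1..k} after d propagation hops (i.e., |A^d(G^{1..k},S)| ≥ β·|U|) if and only if S' = {s_1^0,…,s_p^0} influences at least a β fraction of vertices in the coupled network G after 2d propagation hops (i.e., |A^{2d}(G,S')| ≥ β·|V| where |V| = (k+1)·|U|). -/

import Mathlib

open scoped Classical

/-- LT active sets on a single directed weighted network `G = (V, w, θ)`:
`ltIter w θ S 0 = S` and
`ltIter w θ S (t+1) = ltIter w θ S t ∪ { x | Σ_{y ∈ A^t} w y x ≥ θ x }`. -/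
noncomputable def ltIter {V : Type*} [Fintype V] [DecidableEq V]
    (w : V → V → ℝ) (θ : V → ℝ) (S : Finset V) : ℕ → Finset V
  | 0 => S
  | t + 1 =>
      ltIter w θ S t ∪
        Finset.univ.filter (fun x => θ x ≤ ∑ y ∈ ltIter w θ S t, w y x)

/-- LT active sets on the multiplex system `G^{1..k}`:
`A^0 = S` and `A^{t+1} = A^t ∪ { u | ∃ i, Σ_{v ∈ A^t} w^i v u ≥ θ^i u }`. -/
noncomputable def multiIter {U : Type*} [Fintype U] [DecidableEq U] {k : ℕ}
    (w : Fin k → U → U → ℝ) (θ : Fin k → U → ℝ) (S : Finset U) : ℕ → Finset U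
  | 0 => S
  | t + 1 =>
      multiIter w θ S t ∪
        Finset.univ.filter
          (fun u => ∃ i : Fin k, θ i u ≤ ∑ v ∈ multiIter w θ S t, w i v u)

/-- Thresholds of the clique lossless coupled network.  The vertex `(u, none)` is the
gateway vertex `u⁰` (threshold 1), and `(u, some i)` is the representative vertex `uⁱ`
(threshold `θ^i(u)` if `u ∈ V^i`, and 1 otherwise, i.e. for dummy vertices). -/
noncomputable def cliqueTheta {U : Type*} [DecidableEq U] {k : ℕ}
    (Vmem : Fin k → Finset U) (θ : Fin k → U → ℝ) : U × Option (Fin k) → ℝ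
  | (_, none) => 1
  | (u, some i) => if u ∈ Vmem i then θ i u else 1

/-- Edge weights of the clique lossless coupled network:
`w(u⁰, vⁱ) = w^i(u, v)` for users `u ≠ v` and `1 ≤ i ≤ k`;
`w(uⁱ, uʲ) = θ(uʲ)` for all `0 ≤ i ≠ j ≤ k` (synchronization clique);
all other weights are 0. -/
noncomputable def cliqueW {U : Type*} [DecidableEq U] {k : ℕ}
    (Vmem : Fin k → Finset U) (w : Fin k → U → U → ℝ) (θ : Fin k → U → ℝ) :
    U × Option (Fin k) → U × Option (Fin k) → ℝ :=
  fun x y =>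
    if x.1 = y.1 then
      if x.2 = y.2 then 0 else cliqueTheta Vmem θ y
    else
      match x.2, y.2 with
      | none, some i => w i x.1 y.1
      | _, _ => 0


section Aux

open Finset

variable {U : Type*} [Fintype U] [DecidableEq U] {k : ℕ}

/-- One LT propagation step. -/
noncomputable def ltStep {V : Type*} [Fintype V] [DecidableEq V]
    (w : V → V → ℝ) (θ : V → ℝ) (X : Finset V) : Finset V :=
  X ∪ Finset.univ.filter (fun x => θ x ≤ ∑ y ∈ X, w y x)

lemma ltIter_succ {V : Type*} [Fintype V] [DecidableEq V]
    (w : V → V → ℝ) (θ : V → ℝ) (S : Finset V) (t : ℕ) :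
    ltIter w θ S (t + 1) = ltStep w θ (ltIter w θ S t) := rfl

lemma ltStep_mono {V : Type*} [Fintype V] [DecidableEq V]
    (w : V → V → ℝ) (θ : V → ℝ) (hw : ∀ y x, 0 ≤ w y x)
    {X X' : Finset V} (h : X ⊆ X') : ltStep w θ X ⊆ ltStep w θ X' := by
  intro x hx
  rcases Finset.mem_union.1 hx with hx | hx
  · exact Finset.mem_union.2 (Or.inl (h hx))
  · refine Finset.mem_union.2 (Or.inr ?_)
    rw [Finset.mem_filter] at hx ⊢
    refine ⟨Finset.mem_univ _, hx.2.trans ?_⟩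
    exact Finset.sum_le_sum_of_subset_of_nonneg h (fun y _ _ => hw y x)

variable (Vmem : Fin k → Finset U) (w : Fin k → U → U → ℝ) (θ : Fin k → U → ℝ)

/-- All `k+1` copies of the users in `T`. -/
noncomputable def cpSet (T : Finset U) : Finset (U × Option (Fin k)) :=
  T ×ˢ Finset.univ

lemma mem_cpSet {T : Finset U} {x : U × Option (Fin k)} :
    x ∈ cpSet (k := k) T ↔ x.1 ∈ T := by
  simp [cpSet, Finset.mem_product]

lemma card_cpSet (T : Finset U) : (cpSet (k := k) T).card = T.card * (k + 1) := by
  simp [cpSet, Finset.card_product]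

/-- Newly activated representative vertices. -/
noncomputable def repF (T : Finset U) : Finset (U × Option (Fin k)) :=
  Finset.univ.filter (fun x => ∃ i, x.2 = some i ∧ θ i x.1 ≤ ∑ v ∈ T, w i v x.1)

/-- One multiplex propagation step. -/
noncomputable def mstep (T : Finset U) : Finset U :=
  T ∪ Finset.univ.filter (fun u => ∃ i : Fin k, θ i u ≤ ∑ v ∈ T, w i v u)

lemma multiIter_succ (S : Finset U) (t : ℕ) :
    multiIter w θ S (t + 1) = mstep w θ (multiIter w θ S t) := rfl

variable (hw0 : ∀ i v u, 0 ≤ w i v u)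
  (hwV : ∀ i v u, v ∉ Vmem i ∨ u ∉ Vmem i → w i v u = 0)
  (hθpos : ∀ i u, 0 < θ i u)

set_option linter.unusedSectionVars false

include hθpos in
lemma cθ_pos : ∀ x, 0 < cliqueTheta Vmem θ x := by
  rintro ⟨u, _ | i⟩
  · norm_num [cliqueTheta]
  · simp only [cliqueTheta]
    split <;> [exact hθpos i u; norm_num]

include hw0 hθpos in
lemma cw_nonneg : ∀ x y, 0 ≤ cliqueW Vmem w θ x y := by
  rintro ⟨a, c⟩ ⟨b, j⟩
  by_cases hab : a = b
  · by_cases hcj : c = j <;>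
      simp [cliqueW, hab, hcj, le_of_lt (cθ_pos Vmem θ hθpos (b, j))]
  · cases c <;> cases j <;> simp [cliqueW, hab, hw0]

lemma cw_same_user {u : U} {c j : Option (Fin k)} (h : c ≠ j) :
    cliqueW Vmem w θ (u, c) (u, j) = cliqueTheta Vmem θ (u, j) := by
  simp [cliqueW, h]

lemma cw_gw_rep {v u : U} (h : v ≠ u) (i : Fin k) :
    cliqueW Vmem w θ (v, none) (u, some i) = w i v u := by
  simp [cliqueW, h]

lemma cw_rep_other {v u : U} (h : v ≠ u) (j : Fin k) (c : Option (Fin k)) :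
    cliqueW Vmem w θ (v, some j) (u, c) = 0 := by
  cases c <;> simp [cliqueW, h]

lemma cw_to_none_other {v u : U} (h : v ≠ u) (c : Option (Fin k)) :
    cliqueW Vmem w θ (v, c) (u, none) = 0 := by
  cases c <;> simp [cliqueW, h]

lemma sum_gw (T : Finset U) (x : U × Option (Fin k)) :
    ∑ y ∈ T.image (fun s => (s, (none : Option (Fin k)))), cliqueW Vmem w θ y x =
      ∑ v ∈ T, cliqueW Vmem w θ (v, none) x := by
  exact Finset.sum_image (by intro a _ b _ h; exact congrArg Prod.fst h)

lemma sum_gw_rep {T : Finset U} {u : U} (hu : u ∉ T) (i : Fin k) :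
    ∑ y ∈ T.image (fun s => (s, (none : Option (Fin k)))),
        cliqueW Vmem w θ y (u, some i) = ∑ v ∈ T, w i v u := by
  rw [sum_gw]
  refine Finset.sum_congr rfl (fun v hv => ?_)
  exact cw_gw_rep Vmem w θ (fun h => hu (by rwa [h] at hv)) i

lemma sum_cp_rep {T : Finset U} {u : U} (hu : u ∉ T) (i : Fin k) :
    ∑ y ∈ cpSet (k := k) T, cliqueW Vmem w θ y (u, some i) = ∑ v ∈ T, w i v u := by
  rw [cpSet, Finset.sum_product]
  refine Finset.sum_congr rfl (fun v hv => ?_)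
  have hvu : v ≠ u := fun h => hu (by rwa [h] at hv)
  rw [Fintype.sum_option]
  rw [cw_gw_rep Vmem w θ hvu i]
  have : ∀ j : Fin k, cliqueW Vmem w θ (v, some j) (u, some i) = 0 :=
    fun j => cw_rep_other Vmem w θ hvu j _
  simp [this]

/-- If `u ∉ mstep T`, then `u ∉ Vmem i` is impossible to activate. -/
lemma not_cond_of_not_mstep {T : Finset U} {u : U} (hu : u ∉ mstep w θ T)
    (i : Fin k) : ¬ θ i u ≤ ∑ v ∈ T, w i v u := by
  intro h
  exact hu (Finset.mem_union.2 (Or.inr (Finset.mem_filter.2 ⟨Finset.mem_univ _, ⟨i, h⟩⟩)))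

lemma mem_mstep_left {T : Finset U} {u : U} (hu : u ∈ T) : u ∈ mstep w θ T :=
  Finset.mem_union.2 (Or.inl hu)

include hw0 hwV hθpos in
/-- Non-activation bound: if no copy of `u` is active in `X`, the gateway vertices of
`X` all belong to `T`, and `u ∉ T`, then a copy of `u` receiving enough weight forces
`u ∈ mstep T`. -/
lemma no_new_outside {T : Finset U} {X : Finset (U × Option (Fin k))} {u : U}
    (hXgw : ∀ v : U, (v, (none : Option (Fin k))) ∈ X → v ∈ T)
    (hXu : ∀ c : Option (Fin k), (u, c) ∉ X) (huT : u ∉ T)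
    {j : Option (Fin k)}
    (hact : cliqueTheta Vmem θ (u, j) ≤ ∑ y ∈ X, cliqueW Vmem w θ y (u, j)) :
    ∃ i, j = some i ∧ θ i u ≤ ∑ v ∈ T, w i v u := by
  have hXu1 : ∀ y ∈ X, y.1 ≠ u := by
    rintro ⟨v, c⟩ hy rfl; exact hXu c hy
  cases j with
  | none =>
    have hz : ∑ y ∈ X, cliqueW Vmem w θ y (u, none) = 0 := by
      refine Finset.sum_eq_zero (fun y hy => ?_)
      exact cw_to_none_other Vmem w θ (hXu1 y hy) y.2
    rw [hz] at hact
    have : (0:ℝ) < cliqueTheta Vmem θ (u, none) := cθ_pos Vmem θ hθpos _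
    linarith
  | some i =>
    have hbound : ∑ y ∈ X, cliqueW Vmem w θ y (u, some i) ≤ ∑ v ∈ T, w i v u := by
      have h1 : ∑ y ∈ X.filter (fun y => y.2 = none), cliqueW Vmem w θ y (u, some i) =
          ∑ y ∈ X, cliqueW Vmem w θ y (u, some i) := by
        refine Finset.sum_filter_of_ne ?_
        rintro ⟨v, c⟩ hy hne
        cases c with
        | none => rfl
        | some j' => exact absurd (cw_rep_other Vmem w θ (hXu1 _ hy) j' (some i)) hne
      calc ∑ y ∈ X, cliqueW Vmem w θ y (u, some i)
          = ∑ y ∈ X.filter (fun y => y.2 = none), cliqueW Vmem w θ y (u, some i) :=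
            h1.symm
        _ ≤ ∑ y ∈ T.image (fun s => (s, (none : Option (Fin k)))),
              cliqueW Vmem w θ y (u, some i) := by
            refine Finset.sum_le_sum_of_subset_of_nonneg ?_
              (fun y _ _ => cw_nonneg Vmem w θ hw0 hθpos y _)
            rintro ⟨v, c⟩ hy
            rw [Finset.mem_filter] at hy
            rcases hy with ⟨hyX, hc⟩
            simp only at hc
            subst hc
            exact Finset.mem_image.2 ⟨v, hXgw v hyX, rfl⟩
        _ = ∑ v ∈ T, w i v u := sum_gw_rep Vmem w θ huT i
    by_cases hVi : u ∈ Vmem i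
    · have hle : θ i u ≤ ∑ v ∈ T, w i v u := by
        rw [show cliqueTheta Vmem θ (u, some i) = θ i u by simp [cliqueTheta, hVi]] at hact
        linarith
      exact ⟨i, rfl, hle⟩
    · exfalso
      have hz : ∑ v ∈ T, w i v u = 0 :=
        Finset.sum_eq_zero (fun v _ => hwV i v u (Or.inr hVi))
      have hθ1 : cliqueTheta Vmem θ (u, some i) = 1 := by simp [cliqueTheta, hVi]
      rw [hθ1] at hact
      linarith

include hw0 hwV hθpos in
/-- The odd propagation step: from any set between the gateway copies and all copies
of `T`, one step activates all copies of `T` together with the new representatives. -/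
lemma ltStep_odd {T : Finset U} {X : Finset (U × Option (Fin k))}
    (h1 : T.image (fun s => (s, (none : Option (Fin k)))) ⊆ X)
    (h2 : X ⊆ cpSet T) :
    ltStep (cliqueW Vmem w θ) (cliqueTheta Vmem θ) X = cpSet T ∪ repF w θ T := by
  apply Finset.Subset.antisymm
  · refine (ltStep_mono _ _ (cw_nonneg Vmem w θ hw0 hθpos) h2).trans ?_
    intro x hx
    rcases Finset.mem_union.1 hx with hx | hx
    · exact Finset.mem_union.2 (Or.inl hx)
    · obtain ⟨u, j⟩ := x
      rw [Finset.mem_filter] at hx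
      by_cases hxT : u ∈ T
      · exact Finset.mem_union.2 (Or.inl (mem_cpSet.2 hxT))
      · have hm := no_new_outside Vmem w θ hw0 hwV hθpos (T := T) (X := cpSet T)
          (fun v hv => mem_cpSet.1 hv) (fun c hc => hxT (mem_cpSet.1 hc)) hxT hx.2
        exact Finset.mem_union.2 (Or.inr (Finset.mem_filter.2 ⟨Finset.mem_univ _, hm⟩))
  · intro x hx
    obtain ⟨u, j⟩ := x
    rcases Finset.mem_union.1 hx with hx | hx
    · -- all copies of `T`
      have huT : u ∈ T := mem_cpSet.1 hx
      have hgw : (u, (none : Option (Fin k))) ∈ X :=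
        h1 (Finset.mem_image.2 ⟨u, huT, rfl⟩)
      cases j with
      | none => exact Finset.mem_union.2 (Or.inl hgw)
      | some i =>
        refine Finset.mem_union.2 (Or.inr (Finset.mem_filter.2 ⟨Finset.mem_univ _, ?_⟩))
        have hsingle : cliqueW Vmem w θ (u, none) (u, some i) =
            cliqueTheta Vmem θ (u, some i) :=
          cw_same_user Vmem w θ (by simp)
        calc cliqueTheta Vmem θ (u, some i)
            = cliqueW Vmem w θ (u, none) (u, some i) := hsingle.symm
          _ ≤ ∑ y ∈ X, cliqueW Vmem w θ y (u, some i) :=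
              Finset.single_le_sum (fun y _ => cw_nonneg Vmem w θ hw0 hθpos y _) hgw
    · -- newly activated representatives
      rw [repF, Finset.mem_filter] at hx
      obtain ⟨-, i, hj, hcond⟩ := hx
      simp only at hj
      subst hj
      by_cases huT : u ∈ T
      · -- already handled as a copy of `T`
        have hgw : (u, (none : Option (Fin k))) ∈ X :=
          h1 (Finset.mem_image.2 ⟨u, huT, rfl⟩)
        refine Finset.mem_union.2 (Or.inr (Finset.mem_filter.2 ⟨Finset.mem_univ _, ?_⟩))
        calc cliqueTheta Vmem θ (u, some i)
            = cliqueW Vmem w θ (u, none) (u, some i) :=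
              (cw_same_user Vmem w θ (by simp)).symm
          _ ≤ ∑ y ∈ X, cliqueW Vmem w θ y (u, some i) :=
              Finset.single_le_sum (fun y _ => cw_nonneg Vmem w θ hw0 hθpos y _) hgw
      · have hVi : u ∈ Vmem i := by
          by_contra hVi
          have hz : ∑ v ∈ T, w i v u = 0 :=
            Finset.sum_eq_zero (fun v _ => hwV i v u (Or.inr hVi))
          rw [hz] at hcond
          exact absurd hcond (not_le.2 (hθpos i u))
        refine Finset.mem_union.2 (Or.inr (Finset.mem_filter.2 ⟨Finset.mem_univ _, ?_⟩))
        have hθeq : cliqueTheta Vmem θ (u, some i) = θ i u := by simp [cliqueTheta, hVi]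
        rw [hθeq]
        calc θ i u ≤ ∑ v ∈ T, w i v u := hcond
          _ = ∑ y ∈ T.image (fun s => (s, (none : Option (Fin k)))),
                cliqueW Vmem w θ y (u, some i) := (sum_gw_rep Vmem w θ huT i).symm
          _ ≤ ∑ y ∈ X, cliqueW Vmem w θ y (u, some i) :=
              Finset.sum_le_sum_of_subset_of_nonneg h1
                (fun y _ _ => cw_nonneg Vmem w θ hw0 hθpos y _)

include hw0 hwV hθpos in
/-- The even propagation step: the synchronization cliques fire, so that all copies of
`mstep T` become active and nothing more. -/
lemma ltStep_even (T : Finset U) :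
    ltStep (cliqueW Vmem w θ) (cliqueTheta Vmem θ) (cpSet T ∪ repF w θ T) =
      cpSet (mstep w θ T) := by
  set X : Finset (U × Option (Fin k)) := cpSet T ∪ repF w θ T with hX
  have hXgw : ∀ v : U, (v, (none : Option (Fin k))) ∈ X → v ∈ T := by
    intro v hv
    rcases Finset.mem_union.1 hv with hv | hv
    · exact mem_cpSet.1 hv
    · rw [repF, Finset.mem_filter] at hv
      obtain ⟨-, i, hj, -⟩ := hv
      simp at hj
  have hXm : ∀ y : U × Option (Fin k), y ∈ X → y.1 ∈ mstep w θ T := by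
    rintro ⟨v, c⟩ hv
    rcases Finset.mem_union.1 hv with hv | hv
    · exact mem_mstep_left w θ (mem_cpSet.1 hv)
    · rw [repF, Finset.mem_filter] at hv
      obtain ⟨-, i, hj, hc⟩ := hv
      exact Finset.mem_union.2 (Or.inr (Finset.mem_filter.2 ⟨Finset.mem_univ _, i, hc⟩))
  apply Finset.Subset.antisymm
  · intro x hx
    obtain ⟨u, j⟩ := x
    rw [mem_cpSet]
    rcases Finset.mem_union.1 hx with hx | hx
    · exact hXm _ hx
    · rw [Finset.mem_filter] at hx
      by_cases huT : u ∈ T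
      · exact mem_mstep_left w θ huT
      · by_cases hcopy : ∃ c : Option (Fin k), (u, c) ∈ X
        · obtain ⟨c, hc⟩ := hcopy
          exact hXm (u, c) hc
        · push_neg at hcopy
          obtain ⟨i, -, hcond⟩ :=
            no_new_outside Vmem w θ hw0 hwV hθpos (T := T) (X := X) hXgw hcopy huT hx.2
          exact Finset.mem_union.2
            (Or.inr (Finset.mem_filter.2 ⟨Finset.mem_univ _, i, hcond⟩))
  · intro x hx
    obtain ⟨u, j⟩ := x
    have hum : u ∈ mstep w θ T := mem_cpSet.1 hx
    -- find an active copy of `u` in `X`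
    have hcopy : ∃ c : Option (Fin k), (u, c) ∈ X := by
      rcases Finset.mem_union.1 hum with huT | hucond
      · exact ⟨none, Finset.mem_union.2 (Or.inl (mem_cpSet.2 huT))⟩
      · rw [Finset.mem_filter] at hucond
        obtain ⟨-, i, hcond⟩ := hucond
        exact ⟨some i, Finset.mem_union.2 (Or.inr (Finset.mem_filter.2
          ⟨Finset.mem_univ _, i, rfl, hcond⟩))⟩
    obtain ⟨c, hc⟩ := hcopy
    by_cases hcj : c = j
    · subst hcj
      exact Finset.mem_union.2 (Or.inl hc)
    · refine Finset.mem_union.2 (Or.inr (Finset.mem_filter.2 ⟨Finset.mem_univ _, ?_⟩))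
      calc cliqueTheta Vmem θ (u, j)
          = cliqueW Vmem w θ (u, c) (u, j) := (cw_same_user Vmem w θ hcj).symm
        _ ≤ ∑ y ∈ X, cliqueW Vmem w θ y (u, j) :=
            Finset.single_le_sum (fun y _ => cw_nonneg Vmem w θ hw0 hθpos y _) hc

include hw0 hwV hθpos in
/-- Main invariant: after `2(t+1)` hops the coupled network has activated exactly all
copies of the users active in the multiplex system after `t+1` hops. -/
lemma ltIter_even_eq (S : Finset U) : ∀ t : ℕ,
    ltIter (cliqueW Vmem w θ) (cliqueTheta Vmem θ)
        (S.image (fun s => (s, (none : Option (Fin k))))) (2 * (t + 1)) =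
      cpSet (multiIter w θ S (t + 1)) := by
  have hgwcp : ∀ T : Finset U,
      T.image (fun s => (s, (none : Option (Fin k)))) ⊆ cpSet (k := k) T := by
    intro T x hx
    obtain ⟨s, hs, rfl⟩ := Finset.mem_image.1 hx
    exact mem_cpSet.2 hs
  intro t
  induction t with
  | zero =>
    have h0 : ltIter (cliqueW Vmem w θ) (cliqueTheta Vmem θ)
        (S.image (fun s => (s, (none : Option (Fin k))))) 0 =
        S.image (fun s => (s, (none : Option (Fin k)))) := rfl
    rw [show 2 * (0 + 1) = 1 + 1 by norm_num, ltIter_succ, ltIter_succ, h0,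
      ltStep_odd Vmem w θ hw0 hwV hθpos (Finset.Subset.refl _) (hgwcp S),
      ltStep_even Vmem w θ hw0 hwV hθpos S, multiIter_succ]
    rfl
  | succ t IH =>
    rw [show 2 * (t + 1 + 1) = (2 * (t + 1) + 1) + 1 by ring, ltIter_succ, ltIter_succ,
      IH, ltStep_odd Vmem w θ hw0 hwV hθpos (hgwcp _) (Finset.Subset.refl _),
      ltStep_even Vmem w θ hw0 hwV hθpos, multiIter_succ]
    rfl

end Aux

/-- **Theorem 2.** With the clique lossless coupling scheme, a seed set
`S ⊆ U` influences at least a `β` fraction of the users of `G^{1..k}` after `d` hops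
iff `S' = { s⁰ : s ∈ S }` influences at least a `β` fraction of the vertices of the
coupled network `G` (of which there are `|V| = (k+1)·|U|`) after `2d` hops. -/
theorem lossless_beta_fraction_iff
    {U : Type*} [Fintype U] [DecidableEq U] {k : ℕ} (hk : 1 ≤ k)
    (Vmem : Fin k → Finset U) (w : Fin k → U → U → ℝ) (θ : Fin k → U → ℝ)
    (hw0 : ∀ i v u, 0 ≤ w i v u)
    (hwV : ∀ i v u, v ∉ Vmem i ∨ u ∉ Vmem i → w i v u = 0)
    (hθpos : ∀ i u, 0 < θ i u)
    (β : ℝ) (hβ0 : 0 < β) (hβ1 : β ≤ 1)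
    (S : Finset U) (d : ℕ) (hd : 1 ≤ d) :
    β * (Fintype.card U : ℝ) ≤ ((multiIter w θ S d).card : ℝ) ↔
      β * (((k + 1) * Fintype.card U : ℕ) : ℝ) ≤
        ((ltIter (cliqueW Vmem w θ) (cliqueTheta Vmem θ)
            (S.image (fun s => (s, (none : Option (Fin k))))) (2 * d)).card : ℝ) := by
  obtain ⟨t, rfl⟩ : ∃ t, d = t + 1 := ⟨d - 1, (Nat.succ_pred_eq_of_pos hd).symm⟩
  rw [ltIter_even_eq Vmem w θ hw0 hwV hθpos S t, card_cpSet]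
  have hk1 : (0 : ℝ) < (k : ℝ) + 1 := by positivity
  push_cast
  rw [show β * (((k : ℝ) + 1) * (Fintype.card U : ℝ)) =
        ((k : ℝ) + 1) * (β * (Fintype.card U : ℝ)) by ring,
      show ((multiIter w θ S (t + 1)).card : ℝ) * ((k : ℝ) + 1) =
        ((k : ℝ) + 1) * ((multiIter w θ S (t + 1)).card : ℝ) by ring,
      mul_le_mul_iff_right₀ hk1]
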